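/- Let p, q, r be distinct primes and n = pqr. Then the Balaban index of the 3-dprime divisor function graph Γ₃ equals (19/13)·(26 + 6√70)/35, equivalently (19/26)·(52 + 12√70)/35, as a real number. -/

import Mathlib

/-- The `k`-dprime divisor function graph on the positive divisors of `n`:
two distinct divisors `u`, `v` are adjacent iff `u ∣ v` or `v ∣ u`. -/
def divisorGraph (n : ℕ) : SimpleGraph {d : ℕ // d ∈ n.divisors} where
  Adj u v := u ≠ v ∧ ((u : ℕ) ∣ (v : ℕ) ∨ (v : ℕ) ∣ (u : ℕ))
  symm := ⟨fun _ _ ⟨h, hd⟩ => ⟨h.symm, hd.symm⟩⟩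
  loopless := ⟨fun _ ⟨h, _⟩ => h rfl⟩

instance (n : ℕ) : DecidableRel (divisorGraph n).Adj :=
  fun _ _ => instDecidableAnd

/-- Divisibility (subset) table for the 8 divisors `1,p,q,r,pq,pr,qr,pqr`. -/
def Ttab : Fin 8 → Fin 8 → Bool
  | 0, _ => true
  | 1, 1 => true | 1, 4 => true | 1, 5 => true | 1, 7 => true
  | 2, 2 => true | 2, 4 => true | 2, 6 => true | 2, 7 => true
  | 3, 3 => true | 3, 5 => true | 3, 6 => true | 3, 7 => true
  | 4, 4 => true | 4, 7 => true
  | 5, 5 => true | 5, 7 => true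
  | 6, 6 => true | 6, 7 => true
  | 7, 7 => true
  | _, _ => false

/-- Adjacency table: distinct and comparable. -/
def Rtab (i j : Fin 8) : Bool := (!(i == j)) && (Ttab i j || Ttab j i)

/-- The abstract model of `Γ₃` on `Fin 8`. -/
def Hgraph : SimpleGraph (Fin 8) where
  Adj i j := Rtab i j = true
  symm := ⟨fun i j => (by decide : ∀ i j : Fin 8, Rtab i j = true → Rtab j i = true) i j⟩
  loopless := ⟨fun i => (by decide : ∀ i : Fin 8, ¬ Rtab i i = true) i⟩

instance : DecidableRel Hgraph.Adj := fun _ _ => inferInstanceAs (Decidable (_ = true))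

/-- Distance table for `Hgraph`. -/
def dtab (i j : Fin 8) : ℕ := if i = j then 0 else if Rtab i j then 1 else 2

/-- Distance-sum table. -/
def Dnat : Fin 8 → ℕ := ![7,10,10,10,10,10,10,7]

/-- The eight divisors of `p*q*r`. -/
def Fdef (p q r : ℕ) : Fin 8 → ℕ
  | 0 => 1 | 1 => p | 2 => q | 3 => r
  | 4 => p * q | 5 => p * r | 6 => q * r | 7 => p * q * r

set_option maxHeartbeats 1000000 in
/-- Divisibility among the eight divisors matches the table `Ttab`. -/
lemma Fdef_dvd_iff (p q r : ℕ) (hp : p.Prime) (hq : q.Prime) (hr : r.Prime)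
    (hpq : p ≠ q) (hpr : p ≠ r) (hqr : q ≠ r) (i j : Fin 8) :
    Fdef p q r i ∣ Fdef p q r j ↔ Ttab i j = true := by
  have cpq : Nat.Coprime p q := (Nat.coprime_primes hp hq).mpr hpq
  have cpr : Nat.Coprime p r := (Nat.coprime_primes hp hr).mpr hpr
  have cqr : Nat.Coprime q r := (Nat.coprime_primes hq hr).mpr hqr
  have cpqr : Nat.Coprime (p * q) r := Nat.Coprime.mul cpr cqr
  have hmul : ∀ a b c : ℕ, Nat.Coprime a b → (a * b ∣ c ↔ a ∣ c ∧ b ∣ c) := fun a b c h =>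
    ⟨fun hd => ⟨(dvd_mul_right a b).trans hd, (dvd_mul_left b a).trans hd⟩,
     fun hh => Nat.Coprime.mul_dvd_of_dvd_of_dvd h hh.1 hh.2⟩
  have hmpq : ∀ c, (p * q ∣ c ↔ p ∣ c ∧ q ∣ c) := fun c => hmul _ _ _ cpq
  have hmpr : ∀ c, (p * r ∣ c ↔ p ∣ c ∧ r ∣ c) := fun c => hmul _ _ _ cpr
  have hmqr : ∀ c, (q * r ∣ c ↔ q ∣ c ∧ r ∣ c) := fun c => hmul _ _ _ cqr
  have hmpqr : ∀ c, (p * q * r ∣ c ↔ p * q ∣ c ∧ r ∣ c) := fun c => hmul _ _ _ cpqr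
  fin_cases i <;> fin_cases j <;>
    simp [Fdef, Ttab, hmpq, hmpr, hmqr, hmpqr, hp.dvd_mul, hq.dvd_mul, hr.dvd_mul,
      Nat.prime_dvd_prime_iff_eq, hp, hq, hr, hpq, hpr, hqr,
      hpq.symm, hpr.symm, hqr.symm, Nat.dvd_one, hp.ne_one, hq.ne_one, hr.ne_one]

/-- The edge weight on the model graph. -/
noncomputable def gfun : Sym2 (Fin 8) → ℝ :=
  Sym2.lift ⟨fun i j => (1 : ℝ) / Real.sqrt ((Dnat i : ℝ) * (Dnat j : ℝ)),
    fun i j => by beta_reduce; rw [mul_comm ((Dnat i : ℝ))]⟩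

set_option maxHeartbeats 1000000 in
/-- The Balaban-type edge sum for the model graph. -/
lemma gfun_sum : ∑ e ∈ Hgraph.edgeFinset, gfun e =
    1 / Real.sqrt 49 + 12 * (1 / Real.sqrt 70) + 6 * (1 / Real.sqrt 100) := by
  rw [show Hgraph.edgeFinset =
    ({s((0:Fin 8),1), s(0,2), s(0,3), s(0,4), s(0,5), s(0,6), s(0,7),
      s(1,4), s(1,5), s(1,7), s(2,4), s(2,6), s(2,7), s(3,5), s(3,6), s(3,7),
      s(4,7), s(5,7), s(6,7)} : Finset (Sym2 (Fin 8))) from by decide]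
  simp (config := { decide := true }) only [Finset.sum_insert, Finset.mem_insert,
    Finset.mem_singleton, Finset.sum_singleton, gfun, Sym2.lift_mk,
    show Dnat 0 = 7 from rfl, show Dnat 1 = 10 from rfl, show Dnat 2 = 10 from rfl,
    show Dnat 3 = 10 from rfl, show Dnat 4 = 10 from rfl, show Dnat 5 = 10 from rfl,
    show Dnat 6 = 10 from rfl, show Dnat 7 = 7 from rfl]
  push_cast
  norm_num
  ring_nf

set_option maxHeartbeats 8000000 in
/-- The Balaban index of `Γ₃`: with `m` the number of edges, `N` the number of vertices,
`μ = m − N + 1` the cyclomatic number and `D u = Σ_w d(u,w)`,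
`J(G) = (m/(μ+1)) · Σ_{uv ∈ E} (D u · D v)^{−1/2}`. -/
theorem stmt_16 (p q r : ℕ) (hp : p.Prime) (hq : q.Prime) (hr : r.Prime)
    (hpq : p ≠ q) (hpr : p ≠ r) (hqr : q ≠ r) (n : ℕ) (hn : n = p * q * r)
    (D : {d : ℕ // d ∈ n.divisors} → ℝ)
    (hD : ∀ u, D u = ∑ w : {d : ℕ // d ∈ n.divisors}, ((divisorGraph n).dist u w : ℝ)) :
    (((divisorGraph n).edgeFinset.card : ℝ) /
        ((((divisorGraph n).edgeFinset.card : ℝ) -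
            (Fintype.card {d : ℕ // d ∈ n.divisors} : ℝ) + 1) + 1)) *
      ∑ e ∈ (divisorGraph n).edgeFinset,
        Sym2.lift ⟨fun u v => (1 : ℝ) / Real.sqrt (D u * D v),
          fun u v => by beta_reduce; rw [mul_comm (D u)]⟩ e =
      (19 / 13) * ((26 + 6 * Real.sqrt 70) / 35) := by
  subst hn
  have hT := Fdef_dvd_iff p q r hp hq hr hpq hpr hqr
  have hn0 : p * q * r ≠ 0 :=
    Nat.mul_ne_zero (Nat.mul_ne_zero hp.pos.ne' hq.pos.ne') hr.pos.ne'
  have hFinj : Function.Injective (Fdef p q r) := by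
    intro i j h
    have h1 : Ttab i j = true := (hT i j).mp (h ▸ dvd_refl _)
    have h2 : Ttab j i = true := (hT j i).mp (h ▸ dvd_refl _)
    exact (by decide : ∀ i j : Fin 8, Ttab i j = true → Ttab j i = true → i = j) i j h1 h2
  have hTlast : ∀ i, Ttab i 7 = true := by decide
  have hmem : ∀ i : Fin 8, Fdef p q r i ∈ (p * q * r).divisors := fun i =>
    Nat.mem_divisors.mpr ⟨(hT i 7).mpr (hTlast i), hn0⟩
  set ev : Fin 8 → {d : ℕ // d ∈ (p * q * r).divisors} := fun i => ⟨Fdef p q r i, hmem i⟩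
    with hev
  have hevinj : Function.Injective ev := fun i j h => hFinj (congrArg Subtype.val h)
  have hcardV : Fintype.card {d : ℕ // d ∈ (p * q * r).divisors} = 8 := by
    have cpq : Nat.Coprime p q := (Nat.coprime_primes hp hq).mpr hpq
    have cpr : Nat.Coprime p r := (Nat.coprime_primes hp hr).mpr hpr
    have cqr : Nat.Coprime q r := (Nat.coprime_primes hq hr).mpr hqr
    have cpqr : Nat.Coprime (p * q) r := Nat.Coprime.mul cpr cqr
    have h2 : ∀ x : ℕ, x.Prime → ({1, x} : Finset ℕ).card = 2 := by
      intro x hx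
      rw [Finset.card_insert_of_notMem (by simp [(hx.ne_one).symm]), Finset.card_singleton]
    have hcoe : Fintype.card {d : ℕ // d ∈ (p * q * r).divisors} = (p * q * r).divisors.card :=
      Fintype.card_coe _
    rw [hcoe, cpqr.card_divisors_mul, cpq.card_divisors_mul,
      hp.divisors, hq.divisors, hr.divisors, h2 p hp, h2 q hq, h2 r hr]
  have hbij : Function.Bijective ev :=
    (Fintype.bijective_iff_injective_and_card ev).mpr ⟨hevinj, by simp [hcardV]⟩
  have hAdj : ∀ i j : Fin 8, (divisorGraph (p * q * r)).Adj (ev i) (ev j) ↔ Hgraph.Adj i j := by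
    intro i j
    show (ev i ≠ ev j ∧ (Fdef p q r i ∣ Fdef p q r j ∨ Fdef p q r j ∣ Fdef p q r i)) ↔
      Rtab i j = true
    rw [hT, hT]
    constructor
    · rintro ⟨hne, hor⟩
      have hij : i ≠ j := fun h => hne (congrArg ev h)
      simp only [Rtab, Bool.and_eq_true, Bool.or_eq_true, Bool.not_eq_true',
        beq_eq_false_iff_ne, ne_eq]
      exact ⟨hij, hor⟩
    · intro h
      simp only [Rtab, Bool.and_eq_true, Bool.or_eq_true, Bool.not_eq_true',
        beq_eq_false_iff_ne, ne_eq] at h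
      exact ⟨fun he => h.1 (hevinj he), h.2⟩
  have hdist : ∀ i j : Fin 8, (divisorGraph (p * q * r)).dist (ev i) (ev j) = dtab i j := by
    intro i j
    by_cases hij : i = j
    · subst hij; simp [dtab, SimpleGraph.dist_self]
    by_cases hR : Rtab i j = true
    · rw [SimpleGraph.dist_eq_one_iff_adj.mpr ((hAdj i j).mpr hR)]
      simp [dtab, hij, hR]
    · have hkey : Rtab i 0 = true ∧ Rtab 0 j = true :=
        (by decide : ∀ i j : Fin 8, i ≠ j → ¬ Rtab i j = true →
          Rtab i 0 = true ∧ Rtab 0 j = true) i j hij hR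
      have a1 : (divisorGraph (p * q * r)).Adj (ev i) (ev 0) := (hAdj i 0).mpr hkey.1
      have a2 : (divisorGraph (p * q * r)).Adj (ev 0) (ev j) := (hAdj 0 j).mpr hkey.2
      let w : (divisorGraph (p * q * r)).Walk (ev i) (ev j) := .cons a1 (.cons a2 .nil)
      have hle : (divisorGraph (p * q * r)).dist (ev i) (ev j) ≤ 2 := by
        have := SimpleGraph.dist_le w
        simpa [w] using this
      have hne : ev i ≠ ev j := fun h => hij (hevinj h)
      have h0 : (divisorGraph (p * q * r)).dist (ev i) (ev j) ≠ 0 := by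
        intro h
        rcases SimpleGraph.dist_eq_zero_iff_eq_or_not_reachable.mp h with h' | h'
        · exact hne h'
        · exact h' w.reachable
      have h1 : (divisorGraph (p * q * r)).dist (ev i) (ev j) ≠ 1 := by
        intro h
        exact hR ((hAdj i j).mp (SimpleGraph.dist_eq_one_iff_adj.mp h))
      have h2 : (divisorGraph (p * q * r)).dist (ev i) (ev j) = 2 := by omega
      rw [h2]; simp [dtab, hij, hR]
  have hDsum : ∀ i : Fin 8, (∑ j : Fin 8, dtab i j) = Dnat i := by decide
  have hDval : ∀ i : Fin 8, D (ev i) = (Dnat i : ℝ) := by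
    intro i
    rw [hD]
    rw [← Fintype.sum_equiv (Equiv.ofBijective ev hbij)
      (fun j => ((dtab i j : ℕ) : ℝ))
      (fun w => (((divisorGraph (p * q * r)).dist (ev i) w : ℕ) : ℝ))
      (fun j => congrArg (Nat.cast : ℕ → ℝ) (hdist i j).symm)]
    rw [← Nat.cast_sum, hDsum i]
  have himg : (divisorGraph (p * q * r)).edgeFinset = Hgraph.edgeFinset.image (Sym2.map ev) := by
    ext e
    constructor
    · refine Sym2.ind (fun u v he => ?_) e
      rw [SimpleGraph.mem_edgeFinset, SimpleGraph.mem_edgeSet] at he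
      obtain ⟨i, rfl⟩ := hbij.surjective u
      obtain ⟨j, rfl⟩ := hbij.surjective v
      rw [Finset.mem_image]
      exact ⟨s(i, j), by
        rw [SimpleGraph.mem_edgeFinset, SimpleGraph.mem_edgeSet]
        exact (hAdj i j).mp he, Sym2.map_pair_eq ev i j⟩
    · intro he
      rw [Finset.mem_image] at he
      obtain ⟨e', he', rfl⟩ := he
      refine Sym2.ind (fun i j h' => ?_) e' he'
      rw [SimpleGraph.mem_edgeFinset, SimpleGraph.mem_edgeSet] at h'
      rw [Sym2.map_pair_eq, SimpleGraph.mem_edgeFinset, SimpleGraph.mem_edgeSet]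
      exact (hAdj i j).mpr h'
  have hcardE : (divisorGraph (p * q * r)).edgeFinset.card = 19 := by
    rw [himg, Finset.card_image_of_injective _ (Sym2.map.injective hevinj)]
    decide
  rw [himg, Finset.sum_image (fun a _ b _ h => Sym2.map.injective hevinj h)]
  have hsum : ∑ e ∈ Hgraph.edgeFinset,
      Sym2.lift ⟨fun u v => (1 : ℝ) / Real.sqrt (D u * D v),
        fun u v => by beta_reduce; rw [mul_comm (D u)]⟩ (Sym2.map ev e) =
      ∑ e ∈ Hgraph.edgeFinset, gfun e := by
    refine Finset.sum_congr rfl fun e he => ?_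
    refine Sym2.ind (fun i j _ => ?_) e he
    rw [Sym2.map_pair_eq, Sym2.lift_mk]
    show (1 : ℝ) / Real.sqrt (D (ev i) * D (ev j)) = gfun s(i, j)
    rw [gfun, Sym2.lift_mk, hDval i, hDval j]
  rw [hsum, gfun_sum]
  have hcardE' : (Finset.image (Sym2.map ev) Hgraph.edgeFinset).card = 19 := by
    rw [← himg]; exact hcardE
  rw [hcardE', hcardV]
  have h49 : Real.sqrt 49 = 7 := by
    rw [show (49:ℝ) = 7^2 by norm_num, Real.sqrt_sq (by norm_num)]
  have h100 : Real.sqrt 100 = 10 := by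
    rw [show (100:ℝ) = 10^2 by norm_num, Real.sqrt_sq (by norm_num)]
  have h70 : Real.sqrt 70 * Real.sqrt 70 = 70 := Real.mul_self_sqrt (by norm_num)
  have h70p : (0:ℝ) < Real.sqrt 70 := Real.sqrt_pos.mpr (by norm_num)
  rw [h49, h100]
  push_cast
  field_simp
  linear_combination (-5460 : ℝ) * h70
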